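/- Let C be a random subset of {1,…,N} with inclusion probabilities p_i > 0 and joint probabilities p_{ij}, with probability matrix P defined by P(i,j) = p_{ij}. If v ∈ ℝ^N satisfies P − p pᵀ ⪯ Diag(p_1 v_1, …, p_N v_N), then for any vectors ζ_1,…,ζ_N ∈ ℝ^d and non-negative weights w_1,…,w_N summing to 1: E[‖Σ_{i∈C} w_i ζ_i / p_i − Σ_{i=1}^N w_i ζ_i‖²] ≤ Σ_{i=1}^N w_i² (v_i/p_i) ‖ζ_i‖². -/

import Mathlib

/-- Partial-participation variance lemma. If the probability matrix `P`
(with entries `p_{ij}`, diagonal `p_i`) satisfies `P − p pᵀ ⪯ Diag(p ∘ v)`, then for any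
vectors `ζ i` and non-negative weights `w i` summing to `1`,
`E[‖∑_{i∈C} w i • ζ i / p i − ∑ i w i • ζ i‖²] ≤ ∑ i, w i ^ 2 * (v i / p i) * ‖ζ i‖²`. -/
theorem stmt_2 {N d : ℕ} {Ω : Type*} [Fintype Ω] (μ : Ω → ℝ)
    (hμ0 : ∀ ω, 0 ≤ μ ω) (hμ1 : ∑ ω, μ ω = 1)
    (C : Ω → Finset (Fin N)) (p : Fin N → ℝ) (P : Matrix (Fin N) (Fin N) ℝ)
    (hp : ∀ i, p i = ∑ ω, μ ω * (if i ∈ C ω then (1 : ℝ) else 0))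
    (hP : ∀ i j, P i j = ∑ ω, μ ω * (if i ∈ C ω ∧ j ∈ C ω then (1 : ℝ) else 0))
    (hppos : ∀ i, 0 < p i)
    (v : Fin N → ℝ)
    (hLoewner :
      (Matrix.diagonal (fun i => p i * v i) - (P - Matrix.vecMulVec p p)).PosSemidef)
    (w : Fin N → ℝ) (hw0 : ∀ i, 0 ≤ w i) (hw1 : ∑ i, w i = 1)
    (ζ : Fin N → EuclideanSpace ℝ (Fin d)) :
    ∑ ω, μ ω * ‖(∑ i ∈ C ω, (w i / p i) • ζ i) - ∑ i, w i • ζ i‖ ^ 2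
      ≤ ∑ i, w i ^ 2 * (v i / p i) * ‖ζ i‖ ^ 2 := by
  classical
  have hpne : ∀ i, p i ≠ 0 := fun i => (hppos i).ne'
  set a : Fin N → EuclideanSpace ℝ (Fin d) := fun i => (w i / p i) • ζ i with ha
  set G : Fin N → Fin N → ℝ := fun i j => @inner ℝ _ _ (a i) (a j) with hG
  set χ : Fin N → Ω → ℝ := fun i ω => if i ∈ C ω then 1 else 0 with hχ
  -- rewrite ∑ i, w i • ζ i as ∑ i, p i • a i
  have hwa : ∀ i, w i • ζ i = p i • a i := by
    intro i
    rw [ha, smul_smul]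
    congr 1
    field_simp
    rw [mul_div_assoc, div_self (hpne i), mul_one]
  -- for each ω, the deviation is ∑ i, (χ i ω - p i) • a i
  have hdev : ∀ ω, (∑ i ∈ C ω, (w i / p i) • ζ i) - ∑ i, w i • ζ i
      = ∑ i, (χ i ω - p i) • a i := by
    intro ω
    have h1 : (∑ i ∈ C ω, (w i / p i) • ζ i) = ∑ i, χ i ω • a i := by
      rw [Finset.sum_congr rfl (fun i _ => rfl : ∀ i ∈ C ω, (w i / p i) • ζ i = a i)]
      rw [← Finset.sum_filter_add_sum_filter_not Finset.univ (· ∈ C ω) (fun i => χ i ω • a i)]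
      have h2 : ∑ i ∈ Finset.univ.filter (fun i => ¬ i ∈ C ω), χ i ω • a i = 0 := by
        apply Finset.sum_eq_zero
        intro i hi
        simp only [Finset.mem_filter] at hi
        simp [hχ, hi.2]
      rw [h2, add_zero]
      refine (Finset.sum_congr ?_ ?_)
      · ext i; simp
      · intro i hi
        simp only [Finset.mem_filter] at hi
        simp [hχ, hi.2]; rfl
    rw [h1, Finset.sum_congr rfl (fun i _ => hwa i), ← Finset.sum_sub_distrib]
    congr 1; ext i; rw [← sub_smul]
  -- norm squared as a double sum
  have hnorm : ∀ ω, ‖(∑ i ∈ C ω, (w i / p i) • ζ i) - ∑ i, w i • ζ i‖ ^ 2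
      = ∑ i, ∑ j, (χ i ω - p i) * (χ j ω - p j) * G i j := by
    intro ω
    rw [hdev ω, ← real_inner_self_eq_norm_sq, sum_inner]
    refine Finset.sum_congr rfl fun i _ => ?_
    rw [inner_sum]
    refine Finset.sum_congr rfl fun j _ => ?_
    rw [real_inner_smul_left, real_inner_smul_right, hG]
    ring
  -- LHS equals ∑ i j, (P i j - p i * p j) * G i j
  have hE : ∀ i j, ∑ ω, μ ω * ((χ i ω - p i) * (χ j ω - p j)) = P i j - p i * p j := by
    intro i j
    have key : ∀ ω, μ ω * ((χ i ω - p i) * (χ j ω - p j))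
        = μ ω * (if i ∈ C ω ∧ j ∈ C ω then (1:ℝ) else 0)
          - p j * (μ ω * (if i ∈ C ω then (1:ℝ) else 0))
          - p i * (μ ω * (if j ∈ C ω then (1:ℝ) else 0))
          + p i * p j * μ ω := by
      intro ω
      simp only [hχ]
      by_cases hi : i ∈ C ω <;> by_cases hj : j ∈ C ω <;> simp [hi, hj] <;> ring
    calc ∑ ω, μ ω * ((χ i ω - p i) * (χ j ω - p j))
        = (∑ ω, μ ω * (if i ∈ C ω ∧ j ∈ C ω then (1:ℝ) else 0))
          - p j * (∑ ω, μ ω * (if i ∈ C ω then (1:ℝ) else 0))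
          - p i * (∑ ω, μ ω * (if j ∈ C ω then (1:ℝ) else 0))
          + p i * p j * (∑ ω, μ ω) := by
          simp only [key, Finset.sum_add_distrib, Finset.sum_sub_distrib,
            Finset.mul_sum]
      _ = P i j - p i * p j := by
          rw [← hP i j, ← hp i, ← hp j, hμ1]; ring
  have hLHS : ∑ ω, μ ω * ‖(∑ i ∈ C ω, (w i / p i) • ζ i) - ∑ i, w i • ζ i‖ ^ 2
      = ∑ i, ∑ j, (P i j - p i * p j) * G i j := by
    calc ∑ ω, μ ω * ‖(∑ i ∈ C ω, (w i / p i) • ζ i) - ∑ i, w i • ζ i‖ ^ 2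
        = ∑ ω, ∑ i, ∑ j, μ ω * ((χ i ω - p i) * (χ j ω - p j)) * G i j := by
          refine Finset.sum_congr rfl fun ω _ => ?_
          rw [hnorm ω, Finset.mul_sum]
          refine Finset.sum_congr rfl fun i _ => ?_
          rw [Finset.mul_sum]
          refine Finset.sum_congr rfl fun j _ => ?_
          ring
      _ = ∑ i, ∑ j, ∑ ω, μ ω * ((χ i ω - p i) * (χ j ω - p j)) * G i j := by
          rw [Finset.sum_comm]
          refine Finset.sum_congr rfl fun i _ => Finset.sum_comm
      _ = ∑ i, ∑ j, (P i j - p i * p j) * G i j := by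
          refine Finset.sum_congr rfl fun i _ => Finset.sum_congr rfl fun j _ => ?_
          rw [← Finset.sum_mul, hE i j]
  rw [hLHS]
  -- PSD step: ∑ i j, (P i j - p i * p j) * G i j ≤ ∑ i, p i * v i * G i i
  set M : Matrix (Fin N) (Fin N) ℝ :=
    Matrix.diagonal (fun i => p i * v i) - (P - Matrix.vecMulVec p p) with hM
  have hPSD : 0 ≤ ∑ i, ∑ j, M i j * G i j := by
    have hGk : ∀ i j, G i j = ∑ k, a i k * a j k := by
      intro i j
      rw [hG]
      simp [PiLp.inner_apply, RCLike.inner_apply]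
      exact Finset.sum_congr rfl fun _ _ => mul_comm _ _
    calc (0:ℝ) ≤ ∑ k, dotProduct (fun i => a i k) (M.mulVec (fun i => a i k)) := by
          apply Finset.sum_nonneg
          intro k _
          have := hLoewner.dotProduct_mulVec_nonneg (fun i => a i k)
          simpa using this
      _ = ∑ i, ∑ j, M i j * G i j := by
          simp only [dotProduct, Matrix.mulVec, hGk, Finset.mul_sum]
          rw [Finset.sum_comm]
          refine Finset.sum_congr rfl fun i _ => ?_
          rw [Finset.sum_comm]
          refine Finset.sum_congr rfl fun j _ => ?_
          refine Finset.sum_congr rfl fun k _ => ?_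
          ring
  have hsplit : ∑ i, ∑ j, (P i j - p i * p j) * G i j
      ≤ ∑ i, p i * v i * G i i := by
    have hdiag : ∑ i, ∑ j, (Matrix.diagonal (fun i => p i * v i)) i j * G i j
        = ∑ i, p i * v i * G i i := by
      refine Finset.sum_congr rfl fun i _ => ?_
      rw [Finset.sum_eq_single i]
      · simp
      · intro j _ hj; simp [Matrix.diagonal_apply_ne' _ hj.symm, Matrix.diagonal_apply_ne _ (Ne.symm hj)]
      · simp
    have expand : ∑ i, ∑ j, M i j * G i j
        = (∑ i, ∑ j, (Matrix.diagonal (fun i => p i * v i)) i j * G i j)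
          - ∑ i, ∑ j, (P i j - p i * p j) * G i j := by
      rw [← Finset.sum_sub_distrib]
      refine Finset.sum_congr rfl fun i _ => ?_
      rw [← Finset.sum_sub_distrib]
      refine Finset.sum_congr rfl fun j _ => ?_
      simp only [hM, Matrix.sub_apply, Matrix.vecMulVec_apply]
      ring
    have := hPSD
    rw [expand, hdiag] at this
    linarith
  refine hsplit.trans_eq ?_
  refine Finset.sum_congr rfl fun i _ => ?_
  rw [hG, ha]
  simp only [real_inner_self_eq_norm_sq]
  rw [norm_smul, mul_pow, Real.norm_eq_abs, sq_abs]
  field_simp [hpne i]
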